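/- In Smart Linear Hashing with modulus m and n bins (hash h_a(x) = ⌊(a·x mod m)/(m/n)⌋ with a uniform in the units of Z_m), any two distinct elements x, y with gcd(x−y, m) > ⌈m/n⌉ never hash to the same bin, for any choice of the unit a. -/

import Mathlib

/-- In Smart Linear Hashing with modulus `m` and `n` bins, two distinct elements
`x, y` with `gcd(x - y, m) > ⌈m/n⌉` never hash to the same bin, for any unit
multiplier `a`. -/
theorem stmt_4 (m n : ℕ) (hm : 0 < m) (hn : 0 < n) (x y : ℤ)
    (hx0 : 0 ≤ x) (hxm : x < m) (hy0 : 0 ≤ y) (hym : y < m) (hxy : x ≠ y)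
    (hgcd : ⌈(m : ℚ) / n⌉ < (Int.gcd (x - y) m : ℤ)) :
    ∀ a : ℤ, IsCoprime a (m : ℤ) →
      ⌊((a * x % m : ℤ) : ℝ) / ((m : ℝ) / n)⌋ ≠ ⌊((a * y % m : ℤ) : ℝ) / ((m : ℝ) / n)⌋ := by
  intro a ha heq
  set k : ℤ := (Int.gcd (x - y) m : ℤ) with hk
  set u : ℤ := a * x % m with hu
  set v : ℤ := a * y % m with hv
  have hmR : (0:ℝ) < (m:ℝ) / n := by positivity
  -- from equal floors, |u - v| < m/n over ℝ
  have hlt1 : |((u:ℝ) - v) / ((m:ℝ)/n)| < 1 := by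
    have := Int.abs_sub_lt_one_of_floor_eq_floor heq
    rwa [← sub_div] at this
  have habs : |((u:ℝ) - v)| < (m:ℝ)/n := by
    rw [abs_div, abs_of_pos hmR, div_lt_one hmR] at hlt1
    exact hlt1
  -- k divides u - v
  have hkxy : k ∣ x - y := Int.gcd_dvd_left (x - y) m
  have hkm : k ∣ (m:ℤ) := Int.gcd_dvd_right (x - y) m
  have hdvd : k ∣ u - v := by
    rw [hu, hv, Int.emod_def, Int.emod_def]
    have : a * x - m * (a * x / m) - (a * y - m * (a * y / m))
        = a * (x - y) - m * (a * x / m - a * y / m) := by ring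
    rw [this]
    exact dvd_sub (Dvd.dvd.mul_left hkxy a) (Dvd.dvd.mul_right hkm _)
  -- u ≠ v
  have hne : u ≠ v := by
    intro h
    have hmod : (m:ℤ) ∣ a * x - a * y := Int.ModEq.dvd (h.symm : a * y % (m:ℤ) = a * x % (m:ℤ))
    have : (m:ℤ) ∣ a * (x - y) := by rw [mul_sub]; exact hmod
    have hdxy : (m:ℤ) ∣ x - y := (IsCoprime.symm ha).dvd_of_dvd_mul_left this
    have : x - y = 0 := Int.eq_zero_of_abs_lt_dvd hdxy (by
      rw [abs_sub_lt_iff]; constructor <;> omega)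
    exact hxy (by omega)
  have hpos : 0 < |u - v| := abs_pos.mpr (sub_ne_zero.mpr hne)
  have hkle : k ≤ |u - v| := Int.le_of_dvd hpos ((dvd_abs _ _).mpr hdvd)
  -- m/n < k over ℝ
  have hq : (m:ℚ)/n < (k:ℚ) := lt_of_le_of_lt (Int.le_ceil _) (by exact_mod_cast hgcd)
  have hr : (m:ℝ)/n < (k:ℝ) := by
    have := (Rat.cast_lt (K := ℝ)).mpr hq
    push_cast at this ⊢
    exact this
  have : ((|u - v| : ℤ) : ℝ) < (k:ℝ) := lt_of_lt_of_le (by push_cast; exact habs) hr.le |>.trans_le le_rfl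
  have : (k:ℝ) ≤ ((|u - v| : ℤ) : ℝ) := by exact_mod_cast hkle
  have habsR : ((|u - v| : ℤ) : ℝ) = |((u:ℝ) - v)| := by push_cast; ring_nf
  linarith [habs, hr, this, habsR ▸ this]
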